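/- Let (Ω, F, P) be a probability space, μ ∈ ℝ, and let (X_i)_{i∈ℕ} be independent real random variables on Ω each distributed according to the Gaussian measure with mean μ and variance 1. Then for every ε > 0 and every natural number m ≥ 1, P(⋃_{n ≥ m} {ω : ∑_{i=0}^{n−1} X_i(ω) ≤ n·(μ − ε)}) ≤ exp(−m·ε²/2). -/

import Mathlib

open MeasureTheory ProbabilityTheory Real
open scoped ENNReal NNReal

lemma gaussian_pdf_shift (μ t x : ℝ) :
    rexp (t * x) * gaussianPDFReal μ 1 x
      = rexp (t * μ + t ^ 2 / 2) * gaussianPDFReal (μ + t) 1 x := by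
  simp only [gaussianPDFReal, NNReal.coe_one, mul_one]
  have h : t * x + (-(x - μ) ^ 2 / 2) = (t * μ + t ^ 2 / 2) + (-(x - (μ + t)) ^ 2 / 2) := by ring
  calc rexp (t * x) * ((√(2 * π))⁻¹ * rexp (-(x - μ) ^ 2 / 2))
      = (√(2 * π))⁻¹ * rexp (t * x + (-(x - μ) ^ 2 / 2)) := by rw [exp_add]; ring
    _ = (√(2 * π))⁻¹ * (rexp (t * μ + t ^ 2 / 2) * rexp (-(x - (μ + t)) ^ 2 / 2)) := by
        rw [h, exp_add]
    _ = rexp (t * μ + t ^ 2 / 2) * ((√(2 * π))⁻¹ * rexp (-(x - (μ + t)) ^ 2 / 2)) := by ring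

lemma integrable_exp_mul_gaussianReal' (μ t : ℝ) :
    Integrable (fun x => rexp (t * x)) (gaussianReal μ 1) := by
  rw [gaussianReal_of_var_ne_zero μ one_ne_zero]
  rw [integrable_withDensity_iff (measurable_gaussianPDF μ 1)
    (Filter.Eventually.of_forall fun x => ENNReal.ofReal_lt_top)]
  have heq : (fun x => rexp (t * x) * (gaussianPDF μ 1 x).toReal)
      = fun x => rexp (t * μ + t ^ 2 / 2) * gaussianPDFReal (μ + t) 1 x := by
    funext x
    rw [gaussianPDF, ENNReal.toReal_ofReal (gaussianPDFReal_nonneg μ 1 x), gaussian_pdf_shift]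
  rw [heq]
  exact (integrable_gaussianPDFReal (μ + t) 1).const_mul _

lemma integral_exp_mul_gaussianReal' (μ t : ℝ) :
    ∫ x, rexp (t * x) ∂(gaussianReal μ 1) = rexp (t * μ + t ^ 2 / 2) := by
  rw [gaussianReal_of_var_ne_zero μ one_ne_zero]
  have hpdf : gaussianPDF μ 1 = fun x => ((gaussianPDFReal μ 1 x).toNNReal : ℝ≥0∞) := rfl
  rw [hpdf, integral_withDensity_eq_integral_smul
    ((measurable_gaussianPDFReal μ 1).real_toNNReal)]
  have heq : (fun x => (gaussianPDFReal μ 1 x).toNNReal • rexp (t * x))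
      = fun x => rexp (t * μ + t ^ 2 / 2) * gaussianPDFReal (μ + t) 1 x := by
    funext x
    rw [NNReal.smul_def, smul_eq_mul, Real.coe_toNNReal _ (gaussianPDFReal_nonneg μ 1 x),
      mul_comm, gaussian_pdf_shift]
  rw [heq, integral_const_mul, integral_gaussianPDFReal_eq_one (μ + t) one_ne_zero, mul_one]

set_option maxHeartbeats 2000000 in
theorem gaussian_time_uniform_concentration
    {Ω : Type*} [MeasurableSpace Ω] (P : Measure Ω) [IsProbabilityMeasure P]
    (μ : ℝ) (X : ℕ → Ω → ℝ)
    (hindep : iIndepFun X P)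
    (hmeas : ∀ i, Measurable (X i))
    (hdist : ∀ i, P.map (X i) = gaussianReal μ 1)
    (ε : ℝ) (hε : 0 < ε) (m : ℕ) (hm : 1 ≤ m) :
    P (⋃ n ∈ {n : ℕ | m ≤ n}, {ω | ∑ i ∈ Finset.range n, X i ω ≤ (n : ℝ) * (μ - ε)})
      ≤ ENNReal.ofReal (Real.exp (-(m : ℝ) * ε ^ 2 / 2)) := by
  classical
  set t : ℝ := -ε with ht
  set κ : ℝ := t * μ + t ^ 2 / 2 with hκ
  -- integrability and mean of exp(t * X i)
  have hXint : ∀ i, Integrable (fun ω => rexp (t * X i ω)) P := by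
    intro i
    have h1 : Integrable (fun x => rexp (t * x)) (P.map (X i)) := by
      rw [hdist i]; exact integrable_exp_mul_gaussianReal' μ t
    have h2 := (integrable_map_measure
      (by exact (measurable_const_mul t).exp.aestronglyMeasurable)
      (hmeas i).aemeasurable).mp h1
    exact h2
  have hXmean : ∀ i, ∫ ω, rexp (t * X i ω) ∂P = rexp κ := by
    intro i
    have h1 : ∫ x, rexp (t * x) ∂(P.map (X i)) = rexp κ := by
      rw [hdist i]; exact integral_exp_mul_gaussianReal' μ t
    rw [integral_map (hmeas i).aemeasurable
      (by exact (measurable_const_mul t).exp.aestronglyMeasurable)] at h1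
    exact h1
  -- filtration
  set 𝒢 : Filtration ℕ (inferInstance : MeasurableSpace Ω) :=
    { seq := fun n => ⨆ i ∈ {k : ℕ | k < n}, MeasurableSpace.comap (X i) inferInstance
      mono' := fun n j hnj => biSup_mono fun k hk => lt_of_lt_of_le hk hnj
      le' := fun n => iSup₂_le fun i _ => (hmeas i).comap_le } with h𝒢
  have h𝒢n : ∀ n, 𝒢 n = ⨆ i ∈ {k : ℕ | k < n}, MeasurableSpace.comap (X i) inferInstance :=
    fun n => rfl
  -- the exponential process
  set f : ℕ → Ω → ℝ := fun n ω => rexp (t * ∑ i ∈ Finset.range n, X i ω - n * κ) with hf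
  have hfdef : ∀ n ω, f n ω = rexp (t * ∑ i ∈ Finset.range n, X i ω - n * κ) := fun _ _ => rfl
  have hSmeas : ∀ n, Measurable[𝒢 n] fun ω => ∑ i ∈ Finset.range n, X i ω := by
    intro n
    apply Finset.measurable_sum
    intro i hi
    have h1 : MeasurableSpace.comap (X i) inferInstance ≤ 𝒢 n := by
      rw [h𝒢n]
      exact le_biSup (fun k => MeasurableSpace.comap (X k) inferInstance) (show i ∈ {k : ℕ | k < n} from Finset.mem_range.mp hi)
    exact (comap_measurable (X i)).mono h1 le_rfl
  have hadp : StronglyAdapted 𝒢 f := by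
    intro n
    exact (((hSmeas n).const_mul t).sub measurable_const).exp.stronglyMeasurable
  have hfint : ∀ n, Integrable (f n) P := by
    intro n
    have h1 : Integrable (fun ω => rexp (t * (∑ i ∈ Finset.range n, X i) ω)) P :=
      hindep.integrable_exp_mul_sum hmeas fun i _ => hXint i
    have h2 : f n = fun ω => rexp (-(n * κ)) * rexp (t * (∑ i ∈ Finset.range n, X i) ω) := by
      funext ω
      rw [hfdef, ← exp_add, Finset.sum_apply]
      ring_nf
    rw [h2]
    exact h1.const_mul _
  have hfmean : ∀ n, ∫ ω, f n ω ∂P = 1 := by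
    intro n
    have hmgf : mgf (∑ i ∈ Finset.range n, X i) P t = rexp κ ^ n := by
      rw [hindep.mgf_sum hmeas]
      rw [Finset.prod_congr rfl fun i _ => ?_, Finset.prod_const, Finset.card_range]
      rw [mgf]
      exact hXmean i
    have h2 : f n = fun ω => rexp (-(n * κ)) * rexp (t * (∑ i ∈ Finset.range n, X i) ω) := by
      funext ω
      rw [hfdef, ← exp_add, Finset.sum_apply]
      ring_nf
    rw [h2, integral_const_mul]
    have : ∫ ω, rexp (t * (∑ i ∈ Finset.range n, X i) ω) ∂P = rexp κ ^ n := hmgf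
    rw [this, ← exp_nat_mul, ← exp_add]
    simp
  -- martingale property
  have hmart : Martingale f 𝒢 P := by
    refine martingale_nat hadp hfint fun n => ?_
    set g : Ω → ℝ := fun ω => rexp (t * X n ω - κ) with hg
    have hsplit : f (n + 1) = fun ω => f n ω * g ω := by
      funext ω
      rw [hfdef, hfdef, hg, ← exp_add, Finset.sum_range_succ]
      congr 1
      push_cast
      ring
    have hgint : Integrable g P := by
      have : g = fun ω => rexp (t * X n ω) * rexp (-κ) := by
        funext ω
        show rexp (t * X n ω - κ) = rexp (t * X n ω) * rexp (-κ)
        rw [← exp_add, sub_eq_add_neg]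
      rw [this]
      exact (hXint n).mul_const _
    have hindepn : Indep (MeasurableSpace.comap (X n) inferInstance) (𝒢 n) P := by
      have hd : Disjoint ({n} : Set ℕ) {k : ℕ | k < n} := by
        simp [Set.disjoint_left]
      have h1 := indep_iSup_of_disjoint (fun k => (hmeas k).comap_le) hindep hd
      rw [iSup_singleton] at h1
      rw [h𝒢n]
      exact h1
    have hgsm : StronglyMeasurable[MeasurableSpace.comap (X n) inferInstance] g := by
      exact (((comap_measurable (X n)).const_mul t).sub measurable_const).exp.stronglyMeasurable
    have hcond : P[g|𝒢 n] =ᵐ[P] fun _ => (1 : ℝ) := by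
      have h1 := condExp_indep_eq (hmeas n).comap_le (𝒢.le n) hgsm hindepn
      refine h1.trans ?_
      have h2 : ∫ ω, g ω ∂P = 1 := by
        have : g = fun ω => rexp (t * X n ω) * rexp (-κ) := by
          funext ω
          show rexp (t * X n ω - κ) = rexp (t * X n ω) * rexp (-κ)
          rw [← exp_add, sub_eq_add_neg]
        rw [this, integral_mul_const, hXmean n, ← exp_add]
        simp
      rw [show P[g] = ∫ ω, g ω ∂P from rfl, h2]
    have hfg : Integrable (f n * g) P := by
      have : f n * g = f (n + 1) := by rw [hsplit]; rfl
      rw [this]; exact hfint (n + 1)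
    have hpull := condExp_mul_of_stronglyMeasurable_left (hadp n) hfg hgint
    have : P[f (n + 1)|𝒢 n] =ᵐ[P] f n := by
      rw [hsplit]
      refine (hpull.trans ?_)
      filter_upwards [hcond] with ω hω
      simp only [Pi.mul_apply, hω, mul_one]
    exact this.symm
  have hsub : Submartingale f 𝒢 P := hmart.submartingale
  have hfnonneg : 0 ≤ f := fun n ω => (exp_pos _).le
  -- the threshold
  set c : ℝ≥0 := (rexp ((m : ℝ) * ε ^ 2 / 2)).toNNReal with hc
  have hcr : (c : ℝ) = rexp ((m : ℝ) * ε ^ 2 / 2) := Real.coe_toNNReal _ (exp_pos _).le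
  -- event inclusion
  set A : ℕ → Set Ω := fun n => {ω | ∑ i ∈ Finset.range n, X i ω ≤ (n : ℝ) * (μ - ε)} with hA
  have hincl : ∀ n, m ≤ n → ∀ ω ∈ A n, (c : ℝ) ≤ f n ω := by
    intro n hn ω hω
    rw [hcr, hfdef, exp_le_exp]
    have hS : ∑ i ∈ Finset.range n, X i ω ≤ (n : ℝ) * (μ - ε) := hω
    have hmn : (m : ℝ) ≤ (n : ℝ) := Nat.cast_le.mpr hn
    have h1 : t * ((n : ℝ) * (μ - ε)) ≤ t * ∑ i ∈ Finset.range n, X i ω := by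
      apply mul_le_mul_of_nonpos_left hS
      rw [ht]; linarith
    rw [ht] at h1 ⊢
    rw [hκ, ht]
    nlinarith [sq_nonneg ε, hε.le]
  -- rewriting the union
  set B : ℕ → Set Ω := fun N => ⋃ n ∈ Finset.Icc m N, A n with hB
  have hUeq : (⋃ n ∈ {n : ℕ | m ≤ n}, A n) = ⋃ N, B N := by
    ext ω
    simp only [hB, Set.mem_iUnion, Set.mem_setOf_eq, exists_prop, Finset.mem_Icc]
    constructor
    · rintro ⟨n, hn, h⟩; exact ⟨n, n, ⟨hn, le_rfl⟩, h⟩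
    · rintro ⟨N, n, ⟨hn, _⟩, h⟩; exact ⟨n, hn, h⟩
  have hBmono : Monotone B := by
    intro i j hij
    exact Set.biUnion_subset_biUnion_left (fun n hn => Finset.mem_Icc.mpr
      ⟨(Finset.mem_Icc.mp hn).1, le_trans (Finset.mem_Icc.mp hn).2 hij⟩)
  -- bound each B N
  have hBN : ∀ N, P (B N) ≤ ENNReal.ofReal (Real.exp (-(m : ℝ) * ε ^ 2 / 2)) := by
    intro N
    set E : Set Ω :=
      {ω | (c : ℝ) ≤ (Finset.range (N + 1)).sup' Finset.nonempty_range_add_one fun k => f k ω}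
      with hE
    have hsubset : B N ⊆ E := by
      intro ω hω
      rw [hB] at hω
      simp only [Set.mem_iUnion, exists_prop] at hω
      obtain ⟨n, hn, hωn⟩ := hω
      rw [Finset.mem_Icc] at hn
      have h1 : (c : ℝ) ≤ f n ω := hincl n hn.1 ω hωn
      have h2 : f n ω ≤ (Finset.range (N + 1)).sup' Finset.nonempty_range_add_one fun k => f k ω :=
        Finset.le_sup' (fun k => f k ω) (Finset.mem_range.mpr (by omega))
      exact le_trans h1 h2
    have hmax := maximal_ineq hsub hfnonneg (ε := c) N
    have hint_le : ∫ ω in E, f N ω ∂P ≤ ∫ ω, f N ω ∂P :=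
      setIntegral_le_integral (hfint N) (Filter.Eventually.of_forall fun ω => hfnonneg N ω)
    have hmax2 : (c : ℝ≥0∞) * P E ≤ 1 := by
      calc (c : ℝ≥0∞) * P E = c • P E := rfl
        _ ≤ ENNReal.ofReal (∫ ω in E, f N ω ∂P) := hmax
        _ ≤ ENNReal.ofReal (∫ ω, f N ω ∂P) := ENNReal.ofReal_le_ofReal hint_le
        _ = 1 := by rw [hfmean N, ENNReal.ofReal_one]
    have hcne : (c : ℝ≥0∞) ≠ 0 := by
      rw [ne_eq, ENNReal.coe_eq_zero, hc]
      exact (Real.toNNReal_pos.mpr (exp_pos _)).ne'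
    have hPE : P E ≤ (c : ℝ≥0∞)⁻¹ := by
      rw [mul_comm] at hmax2
      have := (ENNReal.le_div_iff_mul_le (Or.inl hcne) (Or.inl ENNReal.coe_ne_top)).mpr hmax2
      rwa [one_div] at this
    have hcinv : (c : ℝ≥0∞)⁻¹ = ENNReal.ofReal (Real.exp (-(m : ℝ) * ε ^ 2 / 2)) := by
      rw [← ENNReal.coe_inv (by simpa using hcne), hc]
      rw [← Real.toNNReal_inv, ← Real.exp_neg]
      rw [ENNReal.ofReal]
      congr 2
      ring
    calc P (B N) ≤ P E := measure_mono hsubset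
      _ ≤ (c : ℝ≥0∞)⁻¹ := hPE
      _ = _ := hcinv
  rw [hUeq, hBmono.measure_iUnion]
  exact iSup_le hBN
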